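/- Let D be a cancellative convex algebra, X = Pc(D) the convex algebra of nonempty convex subsets of D with Minkowski operations. If A in X adheres to a singleton {x} (i.e., pA + (1-p){x} = {x} for all p in (0,1)), then A = {x}. -/
import Mathlib


/-- A convex algebra presented via binary convex combinations (Stone axioms).
`comb p x y` stands for `p x + (1-p) y`. -/
structure ConvexAlg (X : Type*) where
  comb : ℝ → X → X → X
  idem : ∀ p ∈ Set.Ioo (0:ℝ) 1, ∀ x, comb p x x = x
  comm : ∀ p ∈ Set.Ioo (0:ℝ) 1, ∀ x y, comb p x y = comb (1-p) y x
  assoc : ∀ p ∈ Set.Ioo (0:ℝ) 1, ∀ q ∈ Set.Ioo (0:ℝ) 1, ∀ x y z,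
    comb p (comb q x y) z = comb (p*q) x (comb (p*(1-q)/(1-p*q)) y z)

/-- `x` adheres to `y` : `p x + (1-p) y = y` for all `p ∈ (0,1)`. -/
def ConvexAlg.Adh {X : Type*} (A : ConvexAlg X) (x y : X) : Prop :=
  ∀ p ∈ Set.Ioo (0:ℝ) 1, A.comb p x y = y

def ConvexAlg.Cancellable {X : Type*} (A : ConvexAlg X) (z : X) : Prop :=
  ∀ x y : X, ∀ p ∈ Set.Ioo (0:ℝ) 1, A.comb p x z = A.comb p y z → x = y

def ConvexAlg.IsConvexSet {X : Type*} (A : ConvexAlg X) (C : Set X) : Prop :=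
  ∀ a ∈ C, ∀ b ∈ C, ∀ p ∈ Set.Ioo (0:ℝ) 1, A.comb p a b ∈ C

def ConvexAlg.mink {X : Type*} (A : ConvexAlg X) (p : ℝ) (B C : Set X) : Set X :=
  Set.image2 (A.comb p) B C

/-- over a cancellative convex algebra `D`, if a nonempty convex subset
`S` adheres to a singleton `{x}` in `Pc(D)` (i.e. `p S + (1-p){x} = {x}` for all
`p ∈ (0,1)`), then `S = {x}`. -/
theorem adh_singleton {D : Type*} (A : ConvexAlg D)
    (hcanc : ∀ z : D, A.Cancellable z)
    (S : Set D) (hSne : S.Nonempty) (hSconv : A.IsConvexSet S) (x : D)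
    (hadh : ∀ p ∈ Set.Ioo (0:ℝ) 1, A.mink p S {x} = {x}) :
    S = {x} := by
  have hhalf : (1/2 : ℝ) ∈ Set.Ioo (0:ℝ) 1 := by norm_num
  have key : ∀ s ∈ S, s = x := by
    intro s hs
    have hmem : A.comb (1/2) s x ∈ A.mink (1/2) S {x} :=
      Set.mem_image2_of_mem hs rfl
    rw [hadh (1/2) hhalf] at hmem
    have h1 : A.comb (1/2) s x = A.comb (1/2) x x := by
      rw [A.idem (1/2) hhalf x]; exact hmem
    exact hcanc x s x (1/2) hhalf h1
  obtain ⟨s, hs⟩ := hSne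
  apply Set.eq_singleton_iff_nonempty_unique_mem.mpr
  exact ⟨⟨s, hs⟩, key⟩
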